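/- Any global minimizer X* of f(X) = (1/2)tr(XᵀAX) + (μ/4)‖XᵀX − W‖_F² has the form X* = V_p S_p, where V_p = (v₁,…,v_p) consists of orthonormal eigenvectors of A for the p smallest eigenvalues λ₁ < ⋯ < λ_p, and S_p = diag(±s₁,…,±s_p) with s_i = √(w_i − λ_i/μ). -/

import Mathlib

open Matrix

private lemma aux_quartic {a b c e : ℝ} (h : ∀ t : ℝ, 0 ≤ a*t + b*t^2 + c*t^3 + e*t^4) :
    a = 0 := by
  have hloc : IsLocalMin (fun t : ℝ => a*t + b*t^2 + c*t^3 + e*t^4) 0 := by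
    have : ∀ t : ℝ, (fun t : ℝ => a*t + b*t^2 + c*t^3 + e*t^4) 0 ≤ (fun t : ℝ => a*t + b*t^2 + c*t^3 + e*t^4) t := by
      intro t; simpa using h t
    exact Filter.Eventually.of_forall this
  have hd : HasDerivAt (fun t : ℝ => a*t + b*t^2 + c*t^3 + e*t^4) a 0 := by
    have h1 : HasDerivAt (fun t : ℝ => t) 1 0 := hasDerivAt_id 0
    have h2 := (hasDerivAt_pow 2 (0:ℝ))
    have h3 := (hasDerivAt_pow 3 (0:ℝ))
    have h4 := (hasDerivAt_pow 4 (0:ℝ))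
    have := ((((h1.const_mul a).add (h2.const_mul b)).add (h3.const_mul c)).add (h4.const_mul e))
    refine HasDerivAt.congr_deriv this ?_
    push_cast; ring
  have hz := hloc.deriv_eq_zero
  rw [hd.deriv] at hz
  exact hz

private lemma aux_trace_sq_zero {n p : ℕ} {Z : Matrix (Fin n) (Fin p) ℝ}
    (h : (Zᵀ * Z).trace = 0) : Z = 0 := by
  have hsum : ∑ j : Fin p, ∑ i : Fin n, (Z i j)^2 = 0 := by
    rw [← h]
    simp [Matrix.trace, Matrix.mul_apply, Matrix.diag, sq]
  ext i j
  have h1 : ∀ j ∈ Finset.univ, (0:ℝ) ≤ ∑ i : Fin n, (Z i j)^2 :=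
    fun j _ => Finset.sum_nonneg fun i _ => sq_nonneg _
  have h2 := (Finset.sum_eq_zero_iff_of_nonneg h1).mp hsum j (Finset.mem_univ j)
  have h3 := (Finset.sum_eq_zero_iff_of_nonneg (fun i _ => sq_nonneg (Z i j))).mp h2 i (Finset.mem_univ i)
  simpa using pow_eq_zero_iff (n := 2) (by norm_num) |>.mp h3

private lemma aux_stationary {n p : ℕ}
    (A : Matrix (Fin n) (Fin n) ℝ) (hA : A.IsSymm)
    (μ : ℝ) (w : Fin p → ℝ) (X : Matrix (Fin n) (Fin p) ℝ)
    (hmin : ∀ Y : Matrix (Fin n) (Fin p) ℝ,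
      (1 / 2) * (Xᵀ * A * X).trace +
        (μ / 4) * ((Xᵀ * X - Matrix.diagonal w)ᵀ * (Xᵀ * X - Matrix.diagonal w)).trace
      ≤ (1 / 2) * (Yᵀ * A * Y).trace +
        (μ / 4) * ((Yᵀ * Y - Matrix.diagonal w)ᵀ * (Yᵀ * Y - Matrix.diagonal w)).trace) :
    A * X + μ • (X * (Xᵀ * X - Matrix.diagonal w)) = 0 := by
  have hA' : Aᵀ = A := hA
  have hW : (Matrix.diagonal w)ᵀ = Matrix.diagonal w := Matrix.diagonal_transpose w
  set W : Matrix (Fin p) (Fin p) ℝ := Matrix.diagonal w with hWdef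
  set M : Matrix (Fin p) (Fin p) ℝ := Xᵀ * X - W with hMdef
  have hMsymm : Mᵀ = M := by
    rw [hMdef, Matrix.transpose_sub, Matrix.transpose_mul, Matrix.transpose_transpose, hW]
  have hsymmP : ∀ Y : Matrix (Fin n) (Fin p) ℝ, (Yᵀ * Y - W)ᵀ = Yᵀ * Y - W := by
    intro Y
    rw [Matrix.transpose_sub, Matrix.transpose_mul, Matrix.transpose_transpose, hW]
  set R : Matrix (Fin n) (Fin p) ℝ := A * X + μ • (X * M) with hRdef
  have key : ∀ (E : Matrix (Fin n) (Fin p) ℝ) (t : ℝ),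
      (1 / 2) * (((X + t•E)ᵀ * A * (X + t•E)).trace) +
        (μ / 4) * ((((X + t•E)ᵀ * (X + t•E) - W) * ((X + t•E)ᵀ * (X + t•E) - W)).trace)
      = ((1 / 2) * ((Xᵀ * A * X).trace) + (μ / 4) * ((M * M).trace))
        + ((Eᵀ * R).trace) * t
        + ((1/2) * (Eᵀ * (A * E)).trace
            + (μ/4) * (((Xᵀ*E + Eᵀ*X) * (Xᵀ*E + Eᵀ*X)).trace
              + (M * (Eᵀ*E)).trace + ((Eᵀ*E) * M).trace)) * t^2
        + ((μ/4) * (((Xᵀ*E + Eᵀ*X) * (Eᵀ*E)).trace + ((Eᵀ*E) * (Xᵀ*E + Eᵀ*X)).trace)) * t^3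
        + ((μ/4) * ((Eᵀ*E) * (Eᵀ*E)).trace) * t^4 := by
    intro E t
    have h1 : (Xᵀ * (A * E)).trace = (Eᵀ * (A * X)).trace := by
      rw [← Matrix.trace_transpose (Xᵀ * (A * E))]
      simp only [Matrix.transpose_mul, Matrix.transpose_transpose]
      rw [hA', Matrix.mul_assoc]
    have ha : (M * (Xᵀ * E)).trace = (Eᵀ * (X * M)).trace := by
      rw [← Matrix.trace_transpose (M * (Xᵀ * E))]
      simp only [Matrix.transpose_mul, Matrix.transpose_transpose]
      rw [hMsymm, Matrix.mul_assoc]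
    have hb : (M * (Eᵀ * X)).trace = (Eᵀ * (X * M)).trace := by
      rw [Matrix.trace_mul_comm, Matrix.mul_assoc]
    have hRtr : (Eᵀ * R).trace = (Eᵀ * (A * X)).trace + μ * (Eᵀ * (X * M)).trace := by
      rw [hRdef, Matrix.mul_add, Matrix.trace_add, Matrix.mul_smul, Matrix.trace_smul,
        smul_eq_mul]
    have hT : ((X + t•E)ᵀ * A * (X + t•E)).trace
        = (Xᵀ * A * X).trace + t * (Eᵀ * (A * X)).trace + t * (Xᵀ * (A * E)).trace
          + (t*t) * (Eᵀ * (A * E)).trace := by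
      rw [Matrix.transpose_add, Matrix.transpose_smul]
      simp only [Matrix.add_mul, Matrix.mul_add, Matrix.smul_mul, Matrix.mul_smul, smul_smul,
        Matrix.trace_add, Matrix.trace_smul, smul_eq_mul, Matrix.mul_assoc]
      ring
    have hP : (X + t•E)ᵀ * (X + t•E) - W = M + t•(Xᵀ*E + Eᵀ*X) + (t*t)•(Eᵀ*E) := by
      rw [hMdef]
      rw [Matrix.transpose_add, Matrix.transpose_smul]
      simp only [Matrix.add_mul, Matrix.mul_add, Matrix.smul_mul, Matrix.mul_smul, smul_smul,
        smul_add]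
      module
    have hPP : ((M + t•(Xᵀ*E + Eᵀ*X) + (t*t)•(Eᵀ*E)) * (M + t•(Xᵀ*E + Eᵀ*X) + (t*t)•(Eᵀ*E))).trace
        = (M*M).trace
          + t * ((M*(Xᵀ*E)).trace + (M*(Eᵀ*X)).trace + (((Xᵀ*E + Eᵀ*X))*M).trace)
          + (t*t) * (((Xᵀ*E + Eᵀ*X) * (Xᵀ*E + Eᵀ*X)).trace + (M * (Eᵀ*E)).trace + ((Eᵀ*E) * M).trace)
          + (t*t*t) * (((Xᵀ*E + Eᵀ*X) * (Eᵀ*E)).trace + ((Eᵀ*E) * (Xᵀ*E + Eᵀ*X)).trace)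
          + (t*t*t*t) * ((Eᵀ*E) * (Eᵀ*E)).trace := by
      simp only [Matrix.add_mul, Matrix.mul_add, Matrix.smul_mul, Matrix.mul_smul, smul_smul,
        Matrix.trace_add, Matrix.trace_smul, smul_eq_mul]
      ring
    have hNM : ((Xᵀ*E + Eᵀ*X) * M).trace = (M * (Xᵀ*E + Eᵀ*X)).trace := Matrix.trace_mul_comm _ _
    have hMN : (M * (Xᵀ*E + Eᵀ*X)).trace = (M*(Xᵀ*E)).trace + (M*(Eᵀ*X)).trace := by
      rw [Matrix.mul_add, Matrix.trace_add]
    rw [hT, hP, hPP, hRtr, hNM, hMN, h1, ha, hb]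
    ring
  -- derive R = 0
  have hcoeff : (Rᵀ * R).trace = 0 := by
    apply aux_quartic (b := ((1/2) * (Rᵀ * (A * R)).trace
            + (μ/4) * (((Xᵀ*R + Rᵀ*X) * (Xᵀ*R + Rᵀ*X)).trace
              + (M * (Rᵀ*R)).trace + ((Rᵀ*R) * M).trace)))
      (c := ((μ/4) * (((Xᵀ*R + Rᵀ*X) * (Rᵀ*R)).trace + ((Rᵀ*R) * (Xᵀ*R + Rᵀ*X)).trace)))
      (e := ((μ/4) * ((Rᵀ*R) * (Rᵀ*R)).trace))
    intro t
    have hm := hmin (X + t•R)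
    rw [hsymmP (X + t•R), hsymmP X] at hm
    rw [key R t] at hm
    rw [hMdef] at hm
    linarith [hm]
  have hR0 : R = 0 := aux_trace_sq_zero hcoeff
  rw [hRdef] at hR0
  exact hR0

private lemma structured_val {n p : ℕ} (A : Matrix (Fin n) (Fin n) ℝ) (μ : ℝ) (w : Fin p → ℝ)
    (Z : Matrix (Fin n) (Fin p) ℝ) (d β : Fin p → ℝ)
    (hG : Zᵀ * Z = Matrix.diagonal d)
    (heig : ∀ i, A *ᵥ (fun k => Z k i) = β i • (fun k => Z k i)) :
    (1/2) * (Zᵀ * A * Z).trace +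
      (μ/4) * ((Zᵀ * Z - Matrix.diagonal w)ᵀ * (Zᵀ * Z - Matrix.diagonal w)).trace
    = ∑ i, ((1/2) * β i * d i + (μ/4) * (d i - w i)^2) := by
  have hdi : ∀ i, ∑ k, Z k i * Z k i = d i := by
    intro i
    have := congrFun (congrFun hG i) i
    simpa [Matrix.mul_apply, Matrix.diagonal] using this
  have htr1 : (Zᵀ * A * Z).trace = ∑ i, β i * d i := by
    rw [Matrix.mul_assoc]
    have hdiag : ∀ i, (Zᵀ * (A * Z)) i i = β i * d i := by
      intro i
      have h1 : ∀ k, (A * Z) k i = β i * Z k i := by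
        intro k
        have := congrFun (heig i) k
        simpa [Matrix.mulVec, Matrix.mul_apply, dotProduct] using this
      calc (Zᵀ * (A * Z)) i i = ∑ k, Z k i * (A * Z) k i := by
            simp [Matrix.mul_apply]
        _ = ∑ k, Z k i * (β i * Z k i) := by
            exact Finset.sum_congr rfl fun k _ => by rw [h1 k]
        _ = β i * ∑ k, Z k i * Z k i := by
            rw [Finset.mul_sum]; exact Finset.sum_congr rfl fun k _ => by ring
        _ = β i * d i := by rw [hdi i]
    simp only [Matrix.trace, Matrix.diag]
    exact Finset.sum_congr rfl fun i _ => hdiag i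
  have htr2 : ((Zᵀ * Z - Matrix.diagonal w)ᵀ * (Zᵀ * Z - Matrix.diagonal w)).trace
      = ∑ i, (d i - w i)^2 := by
    rw [hG, Matrix.diagonal_sub, Matrix.diagonal_transpose, Matrix.diagonal_mul_diagonal,
      Matrix.trace_diagonal]
    exact Finset.sum_congr rfl fun i _ => by ring
  rw [htr1, htr2, Finset.mul_sum, Finset.mul_sum, ← Finset.sum_add_distrib]
  exact Finset.sum_congr rfl fun i _ => by ring

private lemma aux_sum_update {p : ℕ} (f : Fin p → ℝ) (i : Fin p) (b : ℝ) :
    ∑ l, Function.update f i b l = (∑ l, f l) - f i + b := by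
  rw [Finset.sum_update_of_mem (Finset.mem_univ i)]
  have h2 := Finset.sum_eq_sum_sdiff_singleton_add (Finset.mem_univ i) f
  linarith [h2]

private lemma aux_upd {n p : ℕ} (A : Matrix (Fin n) (Fin n) ℝ)
    (X : Matrix (Fin n) (Fin p) ℝ) (d β : Fin p → ℝ)
    (hGram : Xᵀ * X = Matrix.diagonal d)
    (heig : ∀ l, A *ᵥ (fun k => X k l) = β l • (fun k => X k l))
    (i : Fin p) (y : Fin n → ℝ) (dy νy : ℝ)
    (hyy : ∑ k, y k * y k = dy)
    (hyX : ∀ m, m ≠ i → ∑ k, y k * X k m = 0)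
    (hey : A *ᵥ y = νy • y)
    (Z : Matrix (Fin n) (Fin p) ℝ)
    (hZ : ∀ k l, Z k l = if l = i then y k else X k l) :
    Zᵀ * Z = Matrix.diagonal (Function.update d i dy) ∧
      ∀ l, A *ᵥ (fun k => Z k l) = (Function.update β i νy l) • (fun k => Z k l) := by
  constructor
  · ext a b
    rw [Matrix.mul_apply]
    simp only [Matrix.transpose_apply, hZ]
    by_cases ha : a = i <;> by_cases hb : b = i
    · subst ha; subst hb
      simp only [eq_self_iff_true, ite_true]
      rw [hyy, Matrix.diagonal_apply_eq, Function.update_self]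
    · subst ha
      simp only [eq_self_iff_true, ite_true, if_neg hb]
      rw [hyX b (fun h => hb h), Matrix.diagonal_apply_ne _ (fun h => hb h.symm)]
    · subst hb
      simp only [eq_self_iff_true, ite_true, if_neg ha]
      rw [Matrix.diagonal_apply_ne _ (fun h => ha h)]
      rw [← hyX a (fun h => ha h)]
      exact Finset.sum_congr rfl fun k _ => by ring
    · simp only [if_neg ha, if_neg hb]
      have := congrFun (congrFun hGram a) b
      rw [Matrix.mul_apply] at this
      simp only [Matrix.transpose_apply] at this
      rw [this]
      by_cases hab : a = b
      · subst hab
        rw [Matrix.diagonal_apply_eq, Matrix.diagonal_apply_eq, Function.update_of_ne ha]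
      · rw [Matrix.diagonal_apply_ne _ hab, Matrix.diagonal_apply_ne _ hab]
  · intro l
    by_cases hl : l = i
    · subst hl
      have hcol : (fun k => Z k l) = y := funext fun k => by rw [hZ]; simp
      rw [hcol, Function.update_self]
      exact hey
    · have hcol : (fun k => Z k l) = (fun k => X k l) := funext fun k => by
        rw [hZ]; simp [hl]
      rw [hcol, Function.update_of_ne hl]
      exact heig l

set_option maxHeartbeats 2000000 in

/-- Any global minimizer of the weighted trace-penalty objective has
the form `X* = V_p S_p`, columns being scaled eigenvectors for the `p` smallest
eigenvalues with scalings `±√(w_i − λ_i/μ)`. -/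
theorem stmt_4 {n p : ℕ} (hpn : p < n)
    (A : Matrix (Fin n) (Fin n) ℝ) (hA : A.IsSymm)
    (V : Matrix (Fin n) (Fin n) ℝ) (hV : Vᵀ * V = 1)
    (lam : Fin n → ℝ) (hAV : A = V * Matrix.diagonal lam * Vᵀ)
    (hmono : Monotone lam)
    (hstrict : ∀ i j : Fin n, i < j → (j : ℕ) ≤ p → lam i < lam j)
    (μ : ℝ) (hμ : 0 < μ)
    (w : Fin p → ℝ) (hwanti : StrictAnti w)
    (hwlam : ∀ i : Fin p, lam (Fin.castLE hpn.le i) / μ < w i)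
    (X : Matrix (Fin n) (Fin p) ℝ)
    (hmin : ∀ Y : Matrix (Fin n) (Fin p) ℝ,
      (1 / 2) * (Xᵀ * A * X).trace +
        (μ / 4) * ((Xᵀ * X - Matrix.diagonal w)ᵀ * (Xᵀ * X - Matrix.diagonal w)).trace
      ≤ (1 / 2) * (Yᵀ * A * Y).trace +
        (μ / 4) * ((Yᵀ * Y - Matrix.diagonal w)ᵀ * (Yᵀ * Y - Matrix.diagonal w)).trace) :
    ∃ (Vp : Matrix (Fin n) (Fin p) ℝ) (s : Fin p → ℝ),
      Vpᵀ * Vp = 1 ∧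
      (∀ i : Fin p, A *ᵥ (fun k => Vp k i) =
        lam (Fin.castLE hpn.le i) • (fun k => Vp k i)) ∧
      (∀ i : Fin p, s i = Real.sqrt (w i - lam (Fin.castLE hpn.le i) / μ) ∨
        s i = -Real.sqrt (w i - lam (Fin.castLE hpn.le i) / μ)) ∧
      X = Vp * Matrix.diagonal s := by
  classical
  have hA' : Aᵀ = A := hA
  set ci : Fin p → Fin n := fun i => Fin.castLE hpn.le i with hcidef
  set c : Fin p → ℝ := fun i => w i - lam (ci i) / μ with hcdef
  have hc0 : ∀ i, 0 < c i := fun i => by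
    have := hwlam i; simp only [hcdef]; linarith
  have hlamc : ∀ i, lam (ci i) = μ * (w i - c i) := by
    intro i
    simp only [hcdef]
    field_simp
    ring
  set d : Fin p → ℝ := fun i => ∑ k, X k i * X k i with hddef
  set ν : Fin p → ℝ := fun i => μ * (w i - d i) with hνdef
  clear_value ci c
  have hciinj : ∀ a b : Fin p, ci a = ci b → a = b := by
    intro a b hab
    rw [hcidef] at hab
    exact Fin.castLE_injective hpn.le hab
  have hd0 : ∀ i, 0 ≤ d i := by
    intro i
    simp only [hddef]
    exact Finset.sum_nonneg fun k _ => mul_self_nonneg _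
  have hcol0 : ∀ i, d i = 0 → (fun k => X k i) = (0 : Fin n → ℝ) := by
    intro i hdi
    simp only [hddef] at hdi
    funext k
    have h1 : ∀ k ∈ Finset.univ, (0:ℝ) ≤ X k i * X k i := fun k _ => mul_self_nonneg _
    have h2 := (Finset.sum_eq_zero_iff_of_nonneg h1).mp hdi k (Finset.mem_univ k)
    simpa using mul_self_eq_zero.mp h2
  clear_value d ν
  -- stationarity
  have hR0 := aux_stationary A hA μ w X hmin
  have hAX : A * X = (-μ) • (X * (Xᵀ * X - Matrix.diagonal w)) := by
    rw [eq_comm, neg_smul, neg_eq_iff_add_eq_zero, add_comm]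
    exact hR0
  -- G := XᵀX is diagonal
  have hGsym : (Xᵀ * X)ᵀ = Xᵀ * X := by
    rw [Matrix.transpose_mul, Matrix.transpose_transpose]
  have hXAXsym : (Xᵀ * (A * X))ᵀ = Xᵀ * (A * X) := by
    simp only [Matrix.transpose_mul, Matrix.transpose_transpose]
    rw [hA', Matrix.mul_assoc]
  have h1 : Xᵀ * (A * X) = (-μ) • ((Xᵀ * X) * (Xᵀ * X - Matrix.diagonal w)) := by
    rw [hAX, Matrix.mul_smul, ← Matrix.mul_assoc]
  have h4 : ((Xᵀ * X) * (Xᵀ * X - Matrix.diagonal w))ᵀ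
      = (Xᵀ * X) * (Xᵀ * X - Matrix.diagonal w) := by
    have h3 : ((-μ) • ((Xᵀ * X) * (Xᵀ * X - Matrix.diagonal w)))ᵀ
        = (-μ) • ((Xᵀ * X) * (Xᵀ * X - Matrix.diagonal w)) := by
      rw [← h1, hXAXsym, h1]
    rw [Matrix.transpose_smul] at h3
    exact smul_right_injective _ (neg_ne_zero.mpr hμ.ne') h3
  have hGW : ((Xᵀ * X) * Matrix.diagonal w)ᵀ = (Xᵀ * X) * Matrix.diagonal w := by
    rw [Matrix.mul_sub] at h4
    rw [Matrix.transpose_sub] at h4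
    have h5 : ((Xᵀ * X) * (Xᵀ * X))ᵀ = (Xᵀ * X) * (Xᵀ * X) := by
      rw [Matrix.transpose_mul, hGsym]
    rw [h5] at h4
    exact sub_right_injective h4
  have hGoff : ∀ a b : Fin p, a ≠ b → (Xᵀ * X) a b = 0 := by
    intro a b hab
    have h6 := congrFun (congrFun hGW a) b
    rw [Matrix.transpose_apply, Matrix.mul_diagonal, Matrix.mul_diagonal] at h6
    have h7 : (Xᵀ * X) b a = (Xᵀ * X) a b := by
      have h8 := congrFun (congrFun hGsym b) a
      rw [Matrix.transpose_apply] at h8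
      exact h8.symm
    rw [h7] at h6
    have hw : w a ≠ w b := fun h => hab (hwanti.injective h)
    have h8 : (Xᵀ * X) a b * (w a - w b) = 0 := by linear_combination h6
    exact (mul_eq_zero.mp h8).resolve_right (sub_ne_zero.mpr hw)
  have hGd : Xᵀ * X = Matrix.diagonal d := by
    ext a b
    by_cases hab : a = b
    · subst hab
      rw [Matrix.diagonal_apply_eq, Matrix.mul_apply]
      simp only [Matrix.transpose_apply, hddef]
    · rw [hGoff a b hab, Matrix.diagonal_apply_ne _ hab]
  have heigX : ∀ i, A *ᵥ (fun k => X k i) = ν i • (fun k => X k i) := by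
    intro i
    funext k
    have h9 := congrFun (congrFun hAX k) i
    have hL : (A *ᵥ fun k' => X k' i) k = (A * X) k i := by
      simp [Matrix.mulVec, dotProduct, Matrix.mul_apply]
    have hRR : ((-μ) • (X * (Xᵀ * X - Matrix.diagonal w))) k i = ν i * X k i := by
      rw [Matrix.smul_apply, hGd, Matrix.diagonal_sub, Matrix.mul_diagonal]
      simp only [hνdef, smul_eq_mul]
      ring
    rw [hL, h9, hRR]
    simp
  -- eigenvector infrastructure
  have hVVT : V * Vᵀ = 1 := mul_eq_one_comm.mp hV
  have hAVcol : ∀ m : Fin n, A *ᵥ (fun k => V k m) = lam m • (fun k => V k m) := by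
    intro m
    have hAVmul : A * V = V * Matrix.diagonal lam := by
      rw [hAV, Matrix.mul_assoc, hV, Matrix.mul_one]
    funext k
    have h10 : (A *ᵥ fun k' => V k' m) k = (A * V) k m := by
      simp [Matrix.mulVec, dotProduct, Matrix.mul_apply]
    rw [h10, hAVmul, Matrix.mul_diagonal]
    simp [mul_comm]
  have hVdot : ∀ m m' : Fin n, (fun k => V k m) ⬝ᵥ (fun k => V k m') = if m = m' then 1 else 0 := by
    intro m m'
    have h11 := congrFun (congrFun hV m) m'
    rw [Matrix.mul_apply] at h11
    simp only [Matrix.transpose_apply] at h11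
    rw [Matrix.one_apply] at h11
    simpa [dotProduct] using h11
  have hexpand : ∀ u : Fin n → ℝ, (∀ m, (fun k => V k m) ⬝ᵥ u = 0) → u = 0 := by
    intro u hu
    have h12 : Vᵀ *ᵥ u = 0 := by
      funext m
      have := hu m
      simpa [Matrix.mulVec, dotProduct, Matrix.transpose_apply] using this
    calc u = 1 *ᵥ u := (Matrix.one_mulVec u).symm
      _ = (V * Vᵀ) *ᵥ u := by rw [hVVT]
      _ = V *ᵥ (Vᵀ *ᵥ u) := (Matrix.mulVec_mulVec u V Vᵀ).symm
      _ = V *ᵥ 0 := by rw [h12]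
      _ = 0 := Matrix.mulVec_zero V
  have hsymdot : ∀ u u' : Fin n → ℝ, (A *ᵥ u) ⬝ᵥ u' = u ⬝ᵥ (A *ᵥ u') := by
    intro u u'
    have h5 : A *ᵥ u = u ᵥ* A := by
      nth_rewrite 1 [← hA']
      rw [Matrix.mulVec_transpose]
    rw [h5, dotProduct_mulVec]
  have hcoefflem : ∀ (u : Fin n → ℝ) (β : ℝ), A *ᵥ u = β • u →
      ∀ m, (lam m - β) * ((fun k => V k m) ⬝ᵥ u) = 0 := by
    intro u β hu m
    have e1 : (A *ᵥ (fun k => V k m)) ⬝ᵥ u = lam m * ((fun k => V k m) ⬝ᵥ u) := by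
      rw [hAVcol m, smul_dotProduct]
      simp
    have e2 : (fun k => V k m) ⬝ᵥ (A *ᵥ u) = β * ((fun k => V k m) ⬝ᵥ u) := by
      rw [hu, dotProduct_smul]
      simp
    have := hsymdot (fun k => V k m) u
    rw [e1, e2] at this
    linarith [this]
  have hlamne : ∀ m m0 : Fin n, (m : ℕ) < p → m0 ≠ m → lam m0 ≠ lam m := by
    intro m m0 hm hne
    rcases hne.lt_or_gt with h | h
    · exact ne_of_lt (hstrict m0 m h (le_of_lt hm))
    · by_cases hple : (m0 : ℕ) ≤ p
      · exact (ne_of_lt (hstrict m m0 h hple)).symm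
      · push_neg at hple
        have hP : lam m < lam ⟨p, hpn⟩ := by
          apply hstrict
          · rw [Fin.lt_def]; exact hm
          · simp
        have hP2 : lam ⟨p, hpn⟩ ≤ lam m0 := by
          apply hmono
          rw [Fin.le_def]
          exact le_of_lt hple
        exact (ne_of_lt (lt_of_lt_of_le hP hP2)).symm
  have hchar : ∀ (m : Fin n), (m : ℕ) < p → ∀ u : Fin n → ℝ, A *ᵥ u = lam m • u →
      u = ((fun k => V k m) ⬝ᵥ u) • (fun k => V k m) := by
    intro m hm u hu
    have h13 : u - ((fun k => V k m) ⬝ᵥ u) • (fun k => V k m) = 0 := by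
      apply hexpand
      intro m0
      rw [dotProduct_sub, dotProduct_smul, hVdot m0 m]
      by_cases hmm : m0 = m
      · subst hmm; simp
      · simp only [if_neg hmm, smul_eq_mul, mul_zero, sub_zero]
        have := hcoefflem u (lam m) hu m0
        have hne := hlamne m m0 hm hmm
        exact (mul_eq_zero.mp this).resolve_left (sub_ne_zero.mpr hne)
    have := sub_eq_zero.mp h13
    exact this
  have horthog : ∀ (u u' : Fin n → ℝ) (β γ : ℝ), A *ᵥ u = β • u → A *ᵥ u' = γ • u' →
      β ≠ γ → u ⬝ᵥ u' = 0 := by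
    intro u u' β γ hu hu' hne
    have e1 : (A *ᵥ u) ⬝ᵥ u' = β * (u ⬝ᵥ u') := by rw [hu, smul_dotProduct]; simp
    have e2 : u ⬝ᵥ (A *ᵥ u') = γ * (u ⬝ᵥ u') := by rw [hu', dotProduct_smul]; simp
    have := hsymdot u u'
    rw [e1, e2] at this
    have h14 : (β - γ) * (u ⬝ᵥ u') = 0 := by linarith
    exact (mul_eq_zero.mp h14).resolve_left (sub_ne_zero.mpr hne)

  -- summand value identity
  have hTval : ∀ j : Fin p, (1/2) * ν j * d j + (μ/4) * (d j - w j)^2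
      = (μ/4) * ((w j)^2 - (d j)^2) := by
    intro j
    simp only [hνdef]
    ring
  -- Gram dots
  have hGram : ∀ a b : Fin p, (fun k => X k a) ⬝ᵥ (fun k => X k b) = if a = b then d a else 0 := by
    intro a b
    have h16 := congrFun (congrFun hGd a) b
    rw [Matrix.mul_apply] at h16
    simp only [Matrix.transpose_apply] at h16
    rw [Matrix.diagonal_apply] at h16
    simpa [dotProduct] using h16
  have hcip : ∀ j : Fin p, ((ci j : Fin n) : ℕ) < p := by
    intro j
    simpa [hcidef] using j.isLt
  have hddot : ∀ j : Fin p, (fun k => X k j) ⬝ᵥ (fun k => X k j) = d j := by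
    intro j
    rw [hGram j j, if_pos rfl]
  -- generic sum-update identity
  have hsump : ∀ (f g : Fin p → ℝ) (j : Fin p) (a b : ℝ),
      (∑ l, ((1/2) * Function.update g j b l * Function.update f j a l
        + (μ/4) * (Function.update f j a l - w l)^2))
      = (∑ l, ((1/2) * g l * f l + (μ/4) * (f l - w l)^2))
        - ((1/2) * g j * f j + (μ/4) * (f j - w j)^2)
        + ((1/2) * b * a + (μ/4) * (a - w j)^2) := by
    intro f g j a b
    have h17 : (fun l => (1/2) * Function.update g j b l * Function.update f j a l
        + (μ/4) * (Function.update f j a l - w l)^2)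
        = Function.update (fun l => (1/2) * g l * f l + (μ/4) * (f l - w l)^2) j
            ((1/2) * b * a + (μ/4) * (a - w j)^2) := by
      funext l
      by_cases hl : l = j
      · subst hl; simp
      · simp [Function.update_of_ne hl]
    rw [h17, aux_sum_update]
  have hvalX := structured_val A μ w X d ν hGd heigX
  -- the candidate replacement column for index i
  -- KEY INDUCTION
  have key : ∀ N : ℕ, ∀ i : Fin p, (i : ℕ) = N → d i = c i := by
    intro N
    induction N using Nat.strong_induction_on with
    | _ N IH =>
    intro i hiN
    have IH' : ∀ m : Fin p, m < i → d m = c m := by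
      intro m hm
      exact IH (m : ℕ) (hiN ▸ Fin.lt_def.mp hm) m rfl
    have hνm : ∀ m : Fin p, m < i → ν m = lam (ci m) := by
      intro m hm
      rw [hlamc m]
      simp only [hνdef]
      rw [IH' m hm]
    have hcolm : ∀ m : Fin p, m < i →
        (fun k => X k m) = ((fun k => V k (ci m)) ⬝ᵥ (fun k => X k m)) • (fun k => V k (ci m)) := by
      intro m hm
      apply hchar (ci m) (hcip m)
      rw [← hνm m hm]
      exact heigX m
    have hsm : ∀ m : Fin p, m < i →
        ((fun k => V k (ci m)) ⬝ᵥ (fun k => X k m)) * ((fun k => V k (ci m)) ⬝ᵥ (fun k => X k m)) = c m := by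
      intro m hm
      have h15 := hddot m
      nth_rewrite 1 [hcolm m hm] at h15
      nth_rewrite 2 [hcolm m hm] at h15
      rw [smul_dotProduct, dotProduct_smul, hVdot, if_pos rfl] at h15
      rw [← IH' m hm]
      simpa using h15
    have hsmne : ∀ m : Fin p, m < i →
        ((fun k => V k (ci m)) ⬝ᵥ (fun k => X k m)) ≠ 0 := by
      intro m hm h
      have := hsm m hm
      rw [h, mul_zero] at this
      exact absurd this.symm (ne_of_gt (hc0 m))
    -- part (A) : d i ≤ c i
    have hdci : d i ≤ c i := by
      by_contra hgt
      push_neg at hgt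
      have hdip : 0 < d i := lt_trans (hc0 i) hgt
      have hνlt : ν i < lam (ci i) := by
        rw [hlamc i]
        simp only [hνdef]
        have := mul_lt_mul_of_pos_left (by linarith only [hgt] : w i - d i < w i - c i) hμ
        linarith only [this]
      have hz : (fun k => X k i) = 0 := by
        apply hexpand
        intro m0
        rcases eq_or_ne (lam m0) (ν i) with heq | hne
        · have hm0 : (m0 : ℕ) < (i : ℕ) := by
            by_contra hge
            push_neg at hge
            have hle2 : lam (ci i) ≤ lam m0 := by
              apply hmono
              rw [Fin.le_def]
              simpa [hcidef] using hge
            rw [heq] at hle2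
            linarith
          set m : Fin p := ⟨(m0 : ℕ), lt_trans hm0 i.isLt⟩ with hmdef
          have hcim : ci m = m0 := by
            apply Fin.ext
            simp [hcidef, hmdef]
          have hmlt : m < i := by
            rw [Fin.lt_def]
            simpa [hmdef] using hm0
          have hmne : m ≠ i := ne_of_lt hmlt
          rw [← hcim]
          have hdot0 : (fun k => X k m) ⬝ᵥ (fun k => X k i) = 0 := by
            rw [hGram m i, if_neg hmne]
          nth_rewrite 1 [hcolm m hmlt] at hdot0
          rw [smul_dotProduct] at hdot0
          exact (mul_eq_zero.mp hdot0).resolve_left (hsmne m hmlt)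
        · have := hcoefflem (fun k => X k i) (ν i) (heigX i) m0
          exact (mul_eq_zero.mp this).resolve_left (sub_ne_zero.mpr hne)
      have : d i = 0 := by
        simp only [hddef]
        have hzk : ∀ k, X k i = 0 := fun k => congrFun hz k
        simp [hzk]
      linarith
    -- main case split
    by_cases hex : ∃ l : Fin p, l ≠ i ∧ 0 < d l ∧ ν l = lam (ci i)
    · -- some other column occupies eigenvalue lam (ci i): contradiction
      obtain ⟨l, hli, hdl, hνl⟩ := hex
      exfalso
      -- two distinct structured columns cannot share the simple eigenvalue lam (ci i)
      have hpar2 : ∀ m1 m2 : Fin p, m1 ≠ m2 → 0 < d m1 → 0 < d m2 →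
          ν m1 = lam (ci i) → ν m2 = lam (ci i) → False := by
        intro m1 m2 hne hd1 hd2 he1 he2
        have hc1 := hchar (ci i) (hcip i) (fun k => X k m1) (by rw [← he1]; exact heigX m1)
        have hc2 := hchar (ci i) (hcip i) (fun k => X k m2) (by rw [← he2]; exact heigX m2)
        have hq1 : ((fun k => V k (ci i)) ⬝ᵥ (fun k => X k m1))
            * ((fun k => V k (ci i)) ⬝ᵥ (fun k => X k m1)) = d m1 := by
          have h15 := hddot m1
          rw [hc1] at h15
          rw [smul_dotProduct, dotProduct_smul, hVdot, if_pos rfl] at h15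
          simpa using h15
        have hq2 : ((fun k => V k (ci i)) ⬝ᵥ (fun k => X k m2))
            * ((fun k => V k (ci i)) ⬝ᵥ (fun k => X k m2)) = d m2 := by
          have h15 := hddot m2
          rw [hc2] at h15
          rw [smul_dotProduct, dotProduct_smul, hVdot, if_pos rfl] at h15
          simpa using h15
        have hq12 : ((fun k => V k (ci i)) ⬝ᵥ (fun k => X k m1))
            * ((fun k => V k (ci i)) ⬝ᵥ (fun k => X k m2)) = 0 := by
          have h15 : (fun k => X k m1) ⬝ᵥ (fun k => X k m2) = 0 := by
            rw [hGram m1 m2, if_neg hne]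
          rw [hc1, hc2] at h15
          rw [smul_dotProduct, dotProduct_smul, hVdot, if_pos rfl] at h15
          simpa using h15
        rcases mul_eq_zero.mp hq12 with h | h
        · rw [h, zero_mul] at hq1; exact absurd hq1.symm (ne_of_gt hd1)
        · rw [h, mul_zero] at hq2; exact absurd hq2.symm (ne_of_gt hd2)
      have hil : i < l := by
        rcases lt_trichotomy l i with h | h | h
        · have := hνm l h
          rw [hνl] at this
          exact absurd this.symm (hlamne (ci i) (ci l) (hcip i)
            (fun hcc => (ne_of_lt h) (hciinj l i hcc)))
        · exact absurd h hli
        · exact h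
      have hwil : w l < w i := hwanti hil
      have hdleq : d l = w l - lam (ci i) / μ := by
        have hνl2 : lam (ci i) / μ = w l - d l := by
          rw [← hνl]
          simp only [hνdef]
          field_simp
        linarith [hνl2]
      -- the sqrt(c i) * v_{ci i} column
      set y : Fin n → ℝ := fun k => Real.sqrt (c i) * V k (ci i) with hydef
      clear_value y
      have hyy : ∑ k, y k * y k = c i := by
        have hv1 : (fun k => V k (ci i)) ⬝ᵥ (fun k => V k (ci i)) = 1 := by
          rw [hVdot, if_pos rfl]
        simp only [dotProduct] at hv1
        have h18 : ∑ k, y k * y k = Real.sqrt (c i) * Real.sqrt (c i) * ∑ k, V k (ci i) * V k (ci i) := by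
          rw [Finset.mul_sum]
          exact Finset.sum_congr rfl fun k _ => by simp only [hydef]; ring
        rw [h18, hv1, mul_one, Real.mul_self_sqrt (hc0 i).le]
      have heyv : A *ᵥ y = lam (ci i) • y := by
        have hy' : y = Real.sqrt (c i) • (fun k => V k (ci i)) := by
          funext k; simp [hydef]
        rw [hy', Matrix.mulVec_smul, hAVcol, smul_comm]
      -- perpendicularity of v_{ci i} to other original columns
      have hperp : ∀ m : Fin p, m ≠ i → m ≠ l →
          (fun k => V k (ci i)) ⬝ᵥ (fun k => X k m) = 0 := by
        intro m hmi hml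
        by_cases hdm : d m = 0
        · rw [hcol0 m hdm]
          simp
        · have hdm' : 0 < d m := lt_of_le_of_ne (hd0 m) (Ne.symm hdm)
          have hνne : ν m ≠ lam (ci i) := fun hcontra => hpar2 m l hml hdm' hdl hcontra hνl
          exact horthog _ _ _ _ (hAVcol (ci i)) (heigX m) (Ne.symm hνne)
      -- Z1 : zero out column l
      set Z1 : Matrix (Fin n) (Fin p) ℝ := Matrix.of fun k m => if m = l then 0 else X k m with hZ1def
      obtain ⟨hGZ1, heigZ1⟩ := aux_upd A X d ν hGd heigX l (fun _ => 0) 0 0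
        (by simp) (fun m hm => by simp) (by funext k; simp [Matrix.mulVec, dotProduct]) Z1 (fun k m => rfl)
      -- Z2 : put y into column i
      set Z2 : Matrix (Fin n) (Fin p) ℝ := Matrix.of fun k m => if m = i then y k else Z1 k m with hZ2def
      have hyZ1 : ∀ m, m ≠ i → ∑ k, y k * Z1 k m = 0 := by
        intro m hmi
        by_cases hml : m = l
        · subst hml
          simp [hZ1def]
        · have hz1m : ∀ k, Z1 k m = X k m := fun k => by simp [hZ1def, hml]
          simp only [hz1m]
          have hp := hperp m hmi hml
          simp only [dotProduct] at hp
          have hfac : ∑ k, y k * X k m = Real.sqrt (c i) * ∑ k, V k (ci i) * X k m := by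
            rw [Finset.mul_sum]
            exact Finset.sum_congr rfl fun k _ => by simp only [hydef]; ring
          rw [hfac, hp, mul_zero]
      obtain ⟨hGZ2, heigZ2⟩ := aux_upd A Z1 (Function.update d l 0) (Function.update ν l 0)
        hGZ1 heigZ1 i y (c i) (lam (ci i)) hyy hyZ1 heyv Z2 (fun k m => rfl)
      -- value of Z2 comparison
      have hvalZ2 := structured_val A μ w Z2 _ _ hGZ2 heigZ2
      have hmZ2 := hmin Z2
      rw [hvalX, hvalZ2] at hmZ2
      rw [hsump (Function.update d l 0) (Function.update ν l 0) i (c i) (lam (ci i))] at hmZ2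
      rw [hsump d ν l 0 0] at hmZ2
      simp only [Function.update_of_ne (ne_of_lt hil)] at hmZ2
      have h0l : (1/2)*(0:ℝ)*(0:ℝ) + (μ/4)*((0:ℝ) - w l)^2 = (μ/4)*(w l)^2 := by ring
      have hTnew : (1/2) * lam (ci i) * c i + (μ/4) * (c i - w i)^2
          = (μ/4) * ((w i)^2 - (c i)^2) := by rw [hlamc i]; ring
      have hstep : (1/2) * ν l * d l + (μ/4) * (d l - w l)^2
            + ((1/2) * ν i * d i + (μ/4) * (d i - w i)^2)
          ≤ ((1/2) * (0:ℝ) * (0:ℝ) + (μ/4) * ((0:ℝ) - w l)^2)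
            + ((1/2) * lam (ci i) * c i + (μ/4) * (c i - w i)^2) := by
        linarith only [hmZ2]
      have hq : 0 ≤ μ * ((d i)^2 + (d l)^2 - (c i)^2) := by
        nlinarith only [hstep, hTval i, hTval l, hTnew, h0l]
      have hfinal : (c i)^2 ≤ (d i)^2 + (d l)^2 := by
        nlinarith only [hq, hμ]
      have hceq : c i = w i - lam (ci i) / μ := by simp [hcdef]
      rcases eq_or_lt_of_le (hd0 i) with hdi0 | hdip
      · -- d i = 0 : c i² ≤ d l² but 0 ≤ d l < c i
        have h19 : (c i)^2 ≤ (d l)^2 := by nlinarith only [hfinal, hdi0]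
        have hdl_lt : d l < c i := by rw [hdleq, hceq]; linarith only [hwil]
        nlinarith only [hd0 l, hc0 i, h19, hdl_lt]
      · -- 0 < d i
        have hν_ne : ν i ≠ lam (ci i) := fun h =>
          hpar2 i l (fun h2 => hli h2.symm) hdip hdl h hνl
        have hν_ge : lam (ci i) ≤ ν i := by
          rw [hlamc i]
          simp only [hνdef]
          have := mul_le_mul_of_nonneg_left (by linarith only [hdci] : w i - c i ≤ w i - d i) hμ.le
          linarith only [this]
        have hν_gt : lam (ci i) < ν i := lt_of_le_of_ne hν_ge (Ne.symm hν_ne)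
        have hba : lam (ci i)/μ < ν i/μ := by
          rw [div_lt_div_iff₀ hμ hμ]
          exact mul_lt_mul_of_pos_right hν_gt hμ
        have hdieq : d i = w i - ν i / μ := by
          simp only [hνdef]
          field_simp
          ring
        set D := w l - ν i / μ with hDdef
        clear_value D
        rcases le_or_gt D 0 with hD | hD
        · -- swap with truncation : contradiction from hfinal
          have h1' : 0 < w l - lam (ci i)/μ := by rw [← hdleq]; exact hdl
          have h2' : w l - lam (ci i)/μ ≤ ν i/μ - lam (ci i)/μ := by
            have : w l ≤ ν i / μ := by simpa [hDdef] using hD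
            linarith
          have h3' : w l - lam (ci i)/μ < 2*(w i) - ν i/μ - lam (ci i)/μ := by
            have h4' : 0 ≤ w i - ν i/μ := by rw [← hdieq]; exact hdip.le
            linarith
          rw [hceq, hdieq, hdleq] at hfinal
          have hBpos : (0:ℝ) ≤ 2*(w i) - ν i/μ - lam (ci i)/μ := by
            linarith only [h1', h3']
          have hAB : (w l - lam (ci i)/μ) * (2*(w i) - ν i/μ - lam (ci i)/μ)
              ≤ (ν i/μ - lam (ci i)/μ) * (2*(w i) - ν i/μ - lam (ci i)/μ) :=
            mul_le_mul_of_nonneg_right h2' hBpos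
          have hsB : (w l - lam (ci i)/μ) * (w l - lam (ci i)/μ)
              < (w l - lam (ci i)/μ) * (2*(w i) - ν i/μ - lam (ci i)/μ) := by
            exact mul_lt_mul_of_pos_left h3' h1'
          nlinarith only [hfinal, hAB, hsB]
        · -- exchange columns i and l : contradiction
          set z : Fin n → ℝ := fun k => Real.sqrt (D / d i) * X k i with hzdef
          clear_value z
          have hzz : ∑ k, z k * z k = D := by
            have h18 : ∑ k, z k * z k
                = (Real.sqrt (D / d i) * Real.sqrt (D / d i)) * ∑ k, X k i * X k i := by
              rw [Finset.mul_sum]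
              exact Finset.sum_congr rfl fun k _ => by simp only [hzdef]; ring
            rw [h18, Real.mul_self_sqrt (div_nonneg hD.le (hd0 i))]
            have : (∑ k, X k i * X k i) = d i := by simp [hddef]
            rw [this]
            field_simp
          have hvx : (fun k => X k i) ⬝ᵥ (fun k => V k (ci i)) = 0 :=
            horthog _ _ _ _ (heigX i) (hAVcol (ci i)) hν_ne
          have hzZ2 : ∀ m, m ≠ l → ∑ k, z k * Z2 k m = 0 := by
            intro m hml
            by_cases hmi : m = i
            · have hZ2m : ∀ k, Z2 k m = y k := fun k => by simp [hZ2def, hmi]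
              simp only [hZ2m]
              have hfac : ∑ k, z k * y k
                  = (Real.sqrt (D / d i) * Real.sqrt (c i)) * ∑ k, X k i * V k (ci i) := by
                rw [Finset.mul_sum]
                exact Finset.sum_congr rfl fun k _ => by simp only [hzdef, hydef]; ring
              rw [hfac]
              have hvx' : (∑ k, X k i * V k (ci i)) = 0 := by
                simpa [dotProduct] using hvx
              rw [hvx', mul_zero]
            · have hZ2m : ∀ k, Z2 k m = X k m := fun k => by
                simp [hZ2def, hZ1def, hmi, hml]
              simp only [hZ2m]
              have hgim : (fun k => X k i) ⬝ᵥ (fun k => X k m) = 0 := by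
                rw [hGram i m, if_neg (fun h => hmi h.symm)]
              have : ∑ k, z k * X k m = Real.sqrt (D / d i) * ∑ k, X k i * X k m := by
                rw [Finset.mul_sum]
                exact Finset.sum_congr rfl fun k _ => by simp only [hzdef]; ring
              rw [this]
              have : (∑ k, X k i * X k m) = 0 := by
                simpa [dotProduct] using hgim
              rw [this, mul_zero]
          have hez : A *ᵥ z = ν i • z := by
            have hz' : z = Real.sqrt (D / d i) • (fun k => X k i) := by
              funext k; simp [hzdef]
            rw [hz', Matrix.mulVec_smul, heigX i, smul_comm]
          set Z3 : Matrix (Fin n) (Fin p) ℝ :=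
            Matrix.of fun k m => if m = l then z k else Z2 k m with hZ3def
          obtain ⟨hGZ3, heigZ3⟩ := aux_upd A Z2 (Function.update (Function.update d l 0) i (c i))
            (Function.update (Function.update ν l 0) i (lam (ci i)))
            hGZ2 heigZ2 l z D (ν i) hzz hzZ2 hez Z3 (fun k m => rfl)
          have hvalZ3 := structured_val A μ w Z3 _ _ hGZ3 heigZ3
          have hmZ3 := hmin Z3
          rw [hvalX, hvalZ3] at hmZ3
          rw [hsump _ _ l D (ν i)] at hmZ3
          rw [hsump (Function.update d l 0) (Function.update ν l 0) i (c i) (lam (ci i))] at hmZ3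
          rw [hsump d ν l 0 0] at hmZ3
          simp only [Function.update_of_ne (ne_of_lt hil), Function.update_of_ne hli,
            Function.update_self] at hmZ3
          have hTnewl : (1/2) * ν i * D + (μ/4) * (D - w l)^2
              = (μ/4) * ((w l)^2 - D^2) := by
            simp only [hDdef, hνdef]
            field_simp
            ring
          have hstep3 : (1/2) * ν l * d l + (μ/4) * (d l - w l)^2
                + ((1/2) * ν i * d i + (μ/4) * (d i - w i)^2)
              ≤ ((1/2) * lam (ci i) * c i + (μ/4) * (c i - w i)^2)
                + ((1/2) * ν i * D + (μ/4) * (D - w l)^2) := by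
            linarith only [hmZ3]
          have hq3 : 0 ≤ μ * ((d i)^2 + (d l)^2 - (c i)^2 - D^2) := by
            nlinarith only [hstep3, hTval i, hTval l, hTnew, hTnewl]
          have hfinal3 : (c i)^2 + D^2 ≤ (d i)^2 + (d l)^2 := by
            nlinarith only [hq3, hμ]
          rw [hceq, hdieq, hdleq, hDdef] at hfinal3
          nlinarith only [hfinal3, mul_pos (sub_pos.mpr hba) (sub_pos.mpr hwil)]
    · -- no other column occupies lam (ci i) : direct comparison
      push_neg at hex
      set y : Fin n → ℝ := fun k => Real.sqrt (c i) * V k (ci i) with hydef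
      clear_value y
      have hyy : ∑ k, y k * y k = c i := by
        have hv1 : (fun k => V k (ci i)) ⬝ᵥ (fun k => V k (ci i)) = 1 := by
          rw [hVdot, if_pos rfl]
        simp only [dotProduct] at hv1
        have h18 : ∑ k, y k * y k = Real.sqrt (c i) * Real.sqrt (c i) * ∑ k, V k (ci i) * V k (ci i) := by
          rw [Finset.mul_sum]
          exact Finset.sum_congr rfl fun k _ => by simp only [hydef]; ring
        rw [h18, hv1, mul_one, Real.mul_self_sqrt (hc0 i).le]
      have heyv : A *ᵥ y = lam (ci i) • y := by
        have hy' : y = Real.sqrt (c i) • (fun k => V k (ci i)) := by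
          funext k; simp [hydef]
        rw [hy', Matrix.mulVec_smul, hAVcol, smul_comm]
      have hyX : ∀ m, m ≠ i → ∑ k, y k * X k m = 0 := by
        intro m hmi
        by_cases hdm : d m = 0
        · have hzm : ∀ k, X k m = 0 := fun k => congrFun (hcol0 m hdm) k
          exact Finset.sum_eq_zero fun k _ => by rw [hzm k, mul_zero]
        · have hdm' : 0 < d m := lt_of_le_of_ne (hd0 m) (Ne.symm hdm)
          have hνne : ν m ≠ lam (ci i) := hex m hmi hdm'
          have hp : (fun k => V k (ci i)) ⬝ᵥ (fun k => X k m) = 0 :=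
            horthog _ _ _ _ (hAVcol (ci i)) (heigX m) (Ne.symm hνne)
          simp only [dotProduct] at hp
          have : ∑ k, y k * X k m = Real.sqrt (c i) * ∑ k, V k (ci i) * X k m := by
            rw [Finset.mul_sum]
            exact Finset.sum_congr rfl fun k _ => by simp only [hydef]; ring
          rw [this, hp, mul_zero]
      set Z : Matrix (Fin n) (Fin p) ℝ := Matrix.of fun k m => if m = i then y k else X k m with hZdef
      obtain ⟨hGZ, heigZ⟩ := aux_upd A X d ν hGd heigX i y (c i) (lam (ci i))
        hyy hyX heyv Z (fun k m => rfl)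
      have hvalZ := structured_val A μ w Z _ _ hGZ heigZ
      have hmZ := hmin Z
      rw [hvalX, hvalZ] at hmZ
      rw [hsump d ν i (c i) (lam (ci i))] at hmZ
      have hTnew : (1/2) * lam (ci i) * c i + (μ/4) * (c i - w i)^2
          = (μ/4) * ((w i)^2 - (c i)^2) := by rw [hlamc i]; ring
      have hstep : (1/2) * ν i * d i + (μ/4) * (d i - w i)^2
          ≤ (1/2) * lam (ci i) * c i + (μ/4) * (c i - w i)^2 := by
        linarith only [hmZ]
      have hq : 0 ≤ μ * ((d i)^2 - (c i)^2) := by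
        nlinarith only [hstep, hTval i, hTnew]
      have hfinal : (c i)^2 ≤ (d i)^2 := by
        nlinarith only [hq, hμ]
      have : c i ≤ d i := by
        nlinarith only [hc0 i, hd0 i, hfinal]
      exact le_antisymm hdci this
  -- conclusion assembly
  have hdc : ∀ i : Fin p, d i = c i := fun i => key (i : ℕ) i rfl
  have hci_eval : ∀ j : Fin p, ci j = Fin.castLE hpn.le j := fun j => by rw [hcidef]
  have hνi : ∀ i : Fin p, ν i = lam (ci i) := by
    intro i
    rw [hlamc i]
    simp only [hνdef]
    rw [hdc i]
  have hcoli : ∀ i : Fin p, (fun k => X k i)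
      = ((fun k => V k (ci i)) ⬝ᵥ (fun k => X k i)) • (fun k => V k (ci i)) := by
    intro i
    exact hchar (ci i) (hcip i) _ (by rw [← hνi i]; exact heigX i)
  have hs2 : ∀ j : Fin p, ((fun k => V k (ci j)) ⬝ᵥ (fun k => X k j))
      * ((fun k => V k (ci j)) ⬝ᵥ (fun k => X k j)) = c j := by
    intro j
    have h15 := hddot j
    rw [hcoli j] at h15
    rw [smul_dotProduct, dotProduct_smul, hVdot, if_pos rfl] at h15
    rw [← hdc j]
    simpa using h15
  have hcw : ∀ j : Fin p, c j = w j - lam (Fin.castLE hpn.le j) / μ := by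
    intro j
    rw [hcdef]
    simp only
    rw [hcidef]
  refine ⟨Matrix.of (fun k j => V k (ci j)),
    fun j => ((fun k => V k (ci j)) ⬝ᵥ (fun k => X k j)), ?_, ?_, ?_, ?_⟩
  · ext a b
    rw [Matrix.mul_apply]
    have h20 := hVdot (ci a) (ci b)
    simp only [dotProduct] at h20
    simp only [Matrix.transpose_apply, Matrix.of_apply]
    rw [h20, Matrix.one_apply]
    by_cases hab : a = b
    · subst hab; simp
    · rw [if_neg hab, if_neg (fun h => hab (hciinj a b h))]
  · intro i
    have h21 : (fun k => (Matrix.of (fun k j => V k (ci j))) k i) = (fun k => V k (ci i)) := by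
      funext k; simp
    rw [h21, hAVcol (ci i), hci_eval i]
  · intro j
    have habs : Real.sqrt (w j - lam (Fin.castLE hpn.le j) / μ)
        = |((fun k => V k (ci j)) ⬝ᵥ (fun k => X k j))| := by
      rw [← hcw j, show c j = ((fun k => V k (ci j)) ⬝ᵥ (fun k => X k j)) ^ 2 from by
        rw [sq]; exact (hs2 j).symm, Real.sqrt_sq_eq_abs]
    rcases abs_cases (((fun k => V k (ci j)) ⬝ᵥ (fun k => X k j))) with ⟨h22, _⟩ | ⟨h22, _⟩
    · left; rw [habs, h22]
    · right; rw [habs, h22, neg_neg]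
  · ext k j
    rw [Matrix.mul_diagonal]
    have h23 := congrFun (hcoli j) k
    simp only [Pi.smul_apply, smul_eq_mul] at h23
    rw [h23, Matrix.of_apply]
    ring
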